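/- Let ((Aₙ),(Ψₙ)) and ((Bₙ),(Φₙ)) be weak operator-valued frames in B(H,H₀) which are orthogonal to each other. Then ((Aₙ ⊕ Bₙ), (Ψₙ ⊕ Φₙ)), where (Aₙ ⊕ Bₙ)(h ⊕ g) := Aₙ h + Bₙ g for h ⊕ g ∈ H ⊕ H, is a weak OVF in B(H ⊕ H, H₀) whose frame operator is S_{A,Ψ} ⊕ S_{B,Φ}. Moreover, if both ((Aₙ),(Ψₙ)) and ((Bₙ),(Φₙ)) are Parseval, then ((Aₙ ⊕ Bₙ), (Ψₙ ⊕ Φₙ)) is Parseval. -/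

import Mathlib

noncomputable section

open ContinuousLinearMap Filter

variable {H H₀ : Type*} [NormedAddCommGroup H] [InnerProductSpace ℂ H] [CompleteSpace H]
  [NormedAddCommGroup H₀] [InnerProductSpace ℂ H₀] [CompleteSpace H₀]

/-- `ℓ²(I, H₀)`: square-summable `H₀`-valued families indexed by `I`. -/
abbrev l2 (I : Type*) (H₀ : Type*) [NormedAddCommGroup H₀] : Type _ :=
  lp (fun _ : I => H₀) 2

/-- The isometry `Lᵢ : H₀ → ℓ²(I,H₀)` sending `h` to the family equal to `h` at index `i`
and `0` elsewhere. -/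
def Lop {I : Type*} [DecidableEq I] (i : I) : H₀ →L[ℂ] l2 I H₀ :=
  LinearMap.mkContinuous
    { toFun := fun h => lp.single 2 i h
      map_add' := by
        intro a b
        apply lp.ext
        funext j
        by_cases hj : j = i
        · subst hj; simp [lp.single_apply_self]
        · simp [lp.single_apply_ne _ _ _ hj, lp.coeFn_add]
      map_smul' := by
        intro c a
        simp [lp.single_smul] }
    1
    (by
      intro h
      simpa using (lp.norm_single (p := 2) (by norm_num) (fun _ : I => h) i).le)

/-- Convergence of the sequence of partial sums `∑_{n < m} f n` to `x` as `m → ∞`. -/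
def SeqSum {E : Type*} [AddCommMonoid E] [TopologicalSpace E] (f : ℕ → E) (x : E) : Prop :=
  Tendsto (fun m => ∑ n ∈ Finset.range m, f n) atTop (nhds x)

/-- The direct sum `A ⊕ B : H ⊕ H → H₀`, `(h, g) ↦ A h + B g`. -/
def dsumOp (A B : H →L[ℂ] H₀) : WithLp 2 (H × H) →L[ℂ] H₀ :=
  (A ∘L fst ℂ H H + B ∘L snd ℂ H H) ∘L
    ((WithLp.prodContinuousLinearEquiv 2 ℂ H H : WithLp 2 (H × H) ≃L[ℂ] H × H) :
      WithLp 2 (H × H) →L[ℂ] H × H)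

/-- The direct sum `S ⊕ S'` of two operators on `H`, as an operator on `H ⊕ H`. -/
def dsumEnd (S S' : H →L[ℂ] H) : WithLp 2 (H × H) →L[ℂ] WithLp 2 (H × H) :=
  (((WithLp.prodContinuousLinearEquiv 2 ℂ H H).symm : (H × H) ≃L[ℂ] WithLp 2 (H × H)) :
      H × H →L[ℂ] WithLp 2 (H × H)) ∘L
    (S.prodMap S') ∘L
      ((WithLp.prodContinuousLinearEquiv 2 ℂ H H : WithLp 2 (H × H) ≃L[ℂ] H × H) :
        WithLp 2 (H × H) →L[ℂ] H × H)


lemma dsumOp_apply (P Q : H →L[ℂ] H₀) (x : WithLp 2 (H × H)) :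
    dsumOp P Q x = P x.fst + Q x.snd := rfl

lemma adjoint_dsumOp (P Q : H →L[ℂ] H₀) (y : H₀) :
    adjoint (dsumOp P Q) y =
      (WithLp.prodContinuousLinearEquiv 2 ℂ H H).symm (adjoint P y, adjoint Q y) := by
  have h : (((WithLp.prodContinuousLinearEquiv 2 ℂ H H).symm :
        (H × H) ≃L[ℂ] WithLp 2 (H × H)) : (H × H) →L[ℂ] WithLp 2 (H × H)) ∘L
        ((adjoint P).prod (adjoint Q)) = adjoint (dsumOp P Q) := by
    rw [ContinuousLinearMap.eq_adjoint_iff]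
    intro y x
    show inner ℂ (adjoint P y) x.fst + inner ℂ (adjoint Q y) x.snd = _
    simp [dsumOp_apply, inner_add_right, adjoint_inner_left]
  rw [← h]
  rfl

lemma dsumEnd_apply (S S' : H →L[ℂ] H) (x : WithLp 2 (H × H)) :
    dsumEnd S S' x =
      (WithLp.prodContinuousLinearEquiv 2 ℂ H H).symm (S x.fst, S' x.snd) := rfl

lemma dsumEnd_mul (S S' T T' : H →L[ℂ] H) :
    dsumEnd S S' * dsumEnd T T' = dsumEnd (S * T) (S' * T') := by
  ext x <;> rfl

lemma dsumEnd_one : dsumEnd (1 : H →L[ℂ] H) 1 = 1 := by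
  ext x <;> rfl

/-- The direct sum of two mutually orthogonal weak OVFs is a weak OVF on
`H ⊕ H` with frame operator `S_{A,Ψ} ⊕ S_{B,Φ}`; it is Parseval whenever both are. -/
theorem stmt13
    (A Ψ B Φ : ℕ → H →L[ℂ] H₀) (S S' : H →L[ℂ] H)
    (hA : ∀ h : H, SeqSum (fun n => adjoint (Ψ n) (A n h)) (S h)) (hSu : IsUnit S)
    (hB : ∀ h : H, SeqSum (fun n => adjoint (Φ n) (B n h)) (S' h)) (hS'u : IsUnit S')
    (hortho1 : ∀ h : H, SeqSum (fun n => adjoint (Ψ n) (B n h)) 0)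
    (hortho2 : ∀ h : H, SeqSum (fun n => adjoint (Φ n) (A n h)) 0) :
    (∀ x : WithLp 2 (H × H),
      SeqSum (fun n => adjoint (dsumOp (Ψ n) (Φ n)) (dsumOp (A n) (B n) x))
        (dsumEnd S S' x)) ∧
    IsUnit (dsumEnd S S') ∧
    ((S = 1 ∧ S' = 1) →
      ∀ x : WithLp 2 (H × H),
        SeqSum (fun n => adjoint (dsumOp (Ψ n) (Φ n)) (dsumOp (A n) (B n) x)) x) := by
  have key : ∀ x : WithLp 2 (H × H),
      SeqSum (fun n => adjoint (dsumOp (Ψ n) (Φ n)) (dsumOp (A n) (B n) x))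
        (dsumEnd S S' x) := by
    intro x
    have e1 : Tendsto (fun m => ∑ n ∈ Finset.range m,
        (adjoint (Ψ n) (A n x.fst + B n x.snd))) atTop (nhds (S x.fst)) := by
      have := (hA x.fst).add (hortho1 x.snd)
      simp only [SeqSum, ← Finset.sum_add_distrib] at this ⊢
      simpa [map_add] using this
    have e2 : Tendsto (fun m => ∑ n ∈ Finset.range m,
        (adjoint (Φ n) (A n x.fst + B n x.snd))) atTop (nhds (S' x.snd)) := by
      have := (hortho2 x.fst).add (hB x.snd)
      simp only [SeqSum, ← Finset.sum_add_distrib] at this ⊢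
      simpa [map_add] using this
    have := ((WithLp.prodContinuousLinearEquiv 2 ℂ H H).symm.continuous.tendsto _).comp
      (e1.prodMk_nhds e2)
    unfold SeqSum
    rw [dsumEnd_apply]
    convert this using 1
    funext m
    simp only [Function.comp_def, adjoint_dsumOp, dsumOp_apply, ← map_sum]
    rw [prod_mk_sum]
  refine ⟨key, ?_, ?_⟩
  · obtain ⟨u, hu⟩ := hSu
    obtain ⟨v, hv⟩ := hS'u
    refine isUnit_iff_exists.mpr ⟨dsumEnd ↑u⁻¹ ↑v⁻¹, ?_, ?_⟩
    · rw [dsumEnd_mul, ← hu, ← hv, u.mul_inv, v.mul_inv, dsumEnd_one]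
    · rw [dsumEnd_mul, ← hu, ← hv, u.inv_mul, v.inv_mul, dsumEnd_one]
  · rintro ⟨rfl, rfl⟩ x
    have := key x
    rwa [dsumEnd_one] at this
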